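/- Let C be a hereditary class of graphs that is closed under edge addition and closed under the addition of universal vertices. Then M_{G_C} is precisely the class of graphs of the form 2K1 ∨ H with H ∈ M_C; that is, a graph F does not belong to G_C but all proper induced minors of F belong to G_C if and only if F is isomorphic to 2K1 ∨ H for some H ∈ M_C. -/

import Mathlib

open SimpleGraph

namespace PaperSep

variable {V : Type} {W : Type}

/-- There is a walk from `a` to `b` in `G` all of whose vertices avoid the set `S`. -/
def ConnAvoid (G : SimpleGraph V) (S : Set V) (a b : V) : Prop :=
  ∃ p : G.Walk a b, ∀ v ∈ p.support, v ∉ S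

/-- `S` is an `(a,b)`-separator of `G`. -/
def IsSep (G : SimpleGraph V) (a b : V) (S : Set V) : Prop :=
  a ∉ S ∧ b ∉ S ∧ ¬ ConnAvoid G S a b

/-- `S` is a minimal `(a,b)`-separator of `G`. -/
def IsMinSep (G : SimpleGraph V) (a b : V) (S : Set V) : Prop :=
  IsSep G a b S ∧ ∀ T ⊂ S, ¬ IsSep G a b T

/-- `S` is a minimal separator of `G`. -/
def IsMinimalSeparator (G : SimpleGraph V) (S : Set V) : Prop :=
  ∃ a b : V, a ≠ b ∧ ¬ G.Adj a b ∧ IsMinSep G a b S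

/-- `K` is a cutset of `G`, i.e. `G − K` is disconnected. -/
def IsCutset (G : SimpleGraph V) (K : Set V) : Prop :=
  ∃ a b : V, a ∉ K ∧ b ∉ K ∧ ¬ ConnAvoid G K a b

/-- `K` is a minimal cutset of `G`. -/
def IsMinimalCutset (G : SimpleGraph V) (K : Set V) : Prop :=
  IsCutset G K ∧ ∀ T ⊂ K, ¬ IsCutset G T

/-- A class of finite graphs. -/
def GraphClass : Type 1 :=
  ∀ (α : Type) [Finite α], SimpleGraph α → Prop

/-- A class is hereditary if it is closed under isomorphism and induced subgraphs. -/
def Hereditary (C : GraphClass) : Prop :=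
  ∀ (α : Type) [Finite α] (G : SimpleGraph α) (β : Type) [Finite β] (H : SimpleGraph β)
    (s : Set α), Nonempty (H ≃g G.induce s) → C α G → C β H

/-- `G ∈ 𝒢_C` : every minimal separator of `G` induces a graph in `C`. -/
def MemGC (C : GraphClass) {α : Type} [Finite α] (G : SimpleGraph α) : Prop :=
  ∀ S : Set α, IsMinimalSeparator G S → C ↥S (G.induce S)

/-- The class `𝒢_C`. -/
def GCclass (C : GraphClass) : GraphClass :=
  fun α inst G => @MemGC C α inst G

/-- `S` is a union of `k` (possibly empty) cliques of `G`. -/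
def UnionOfCliques (G : SimpleGraph V) (k : ℕ) (S : Set V) : Prop :=
  ∃ f : Fin k → Set V, (∀ i, G.IsClique (f i)) ∧ S = ⋃ i, f i

/-- `G ∈ 𝒢_k` : every minimal separator of `G` is a union of `k` cliques. -/
def MemGk (k : ℕ) (G : SimpleGraph V) : Prop :=
  ∀ S : Set V, IsMinimalSeparator G S → UnionOfCliques G k S

/-- The class `𝒢_k`. -/
def Gkclass (k : ℕ) : GraphClass := fun _ _ G => MemGk k G

/-- The class `𝒞_k` of graphs whose vertex set is a union of `k` cliques. -/
def Ckclass (k : ℕ) : GraphClass := fun _ _ G => UnionOfCliques G k Set.univ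

/-- An induced minor model of `H` in `G`. -/
def IsIMModel (G : SimpleGraph V) (H : SimpleGraph W) (X : W → Set V) : Prop :=
  (∀ w, (X w).Nonempty) ∧
  (∀ u w : W, u ≠ w → Disjoint (X u) (X w)) ∧
  (∀ w, (G.induce (X w)).Connected) ∧
  (∀ u w : W, u ≠ w → (H.Adj u w ↔ ∃ a ∈ X u, ∃ b ∈ X w, G.Adj a b))

/-- `H` is an induced minor of `G`. -/
def IsInducedMinor (H : SimpleGraph W) (G : SimpleGraph V) : Prop :=
  ∃ X : W → Set V, IsIMModel G H X

/-- The class `C` is closed under induced minors. -/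
def IMClosed (C : GraphClass) : Prop :=
  ∀ (α : Type) [Finite α] (G : SimpleGraph α) (β : Type) [Finite β] (H : SimpleGraph β),
    C α G → IsInducedMinor H G → C β H

/-- The class `C` is closed under the addition of edges. -/
def EdgeAddClosed (C : GraphClass) : Prop :=
  ∀ (α : Type) [Finite α] (G : SimpleGraph α) (a b : α), a ≠ b → ¬ G.Adj a b →
    C α G → C α (G ⊔ SimpleGraph.edge a b)

/-- `G ∈ ℳ_C` : `G ∉ C` but every proper induced minor of `G` is in `C`.
(For finite graphs, the proper induced minors of `G` are exactly the induced minors of `G`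
not isomorphic to `G`.) -/
def MemMC (C : GraphClass) {α : Type} [Finite α] (G : SimpleGraph α) : Prop :=
  ¬ C α G ∧
  ∀ (β : Type) [Finite β] (H : SimpleGraph β),
    IsInducedMinor H G → IsEmpty (H ≃g G) → C β H

/-- The complete join of two graphs. -/
def join (G : SimpleGraph V) (H : SimpleGraph W) : SimpleGraph (V ⊕ W) :=
  SimpleGraph.fromRel (fun x y =>
    match x, y with
    | Sum.inl a, Sum.inl b => G.Adj a b
    | Sum.inr a, Sum.inr b => H.Adj a b
    | _, _ => True)

/-- The class `C` is closed under the addition of universal vertices (up to isomorphism). -/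
def UnivAddClosed (C : GraphClass) : Prop :=
  ∀ (α : Type) [Finite α] (G : SimpleGraph α) (β : Type) [Finite β] (H : SimpleGraph β),
    C α G → Nonempty (H ≃g join (⊥ : SimpleGraph (Fin 1)) G) → C β H

/-- `G` has a universal vertex. -/
def HasUniversalVertex (G : SimpleGraph V) : Prop :=
  ∃ v : V, ∀ w : V, w ≠ v → G.Adj v w



/-- `G` is a theta: two nonadjacent vertices joined by three internally disjoint induced
paths of length at least two, with no other vertices or edges
(equivalently, a subdivision of `K_{2,3}`). -/
def IsTheta (G : SimpleGraph V) : Prop :=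
  ∃ (a b : V) (P₁ P₂ P₃ : G.Walk a b),
    a ≠ b ∧
    P₁.IsPath ∧ P₂.IsPath ∧ P₃.IsPath ∧
    2 ≤ P₁.length ∧ 2 ≤ P₂.length ∧ 2 ≤ P₃.length ∧
    (∀ v : V, v ∈ P₁.support → v ∈ P₂.support → v = a ∨ v = b) ∧
    (∀ v : V, v ∈ P₁.support → v ∈ P₃.support → v = a ∨ v = b) ∧
    (∀ v : V, v ∈ P₂.support → v ∈ P₃.support → v = a ∨ v = b) ∧
    (∀ v : V, v ∈ P₁.support ∨ v ∈ P₂.support ∨ v ∈ P₃.support) ∧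
    (∀ u v : V, G.Adj u v ↔
      s(u, v) ∈ P₁.edges ∨ s(u, v) ∈ P₂.edges ∨ s(u, v) ∈ P₃.edges)

/-- `G` is a pyramid: an apex `a` joined to a triangle `b₁b₂b₃` by three paths sharing only
`a`, at least two of which have length at least two, with no other vertices or edges. -/
def IsPyramid (G : SimpleGraph V) : Prop :=
  ∃ (a b₁ b₂ b₃ : V) (P₁ : G.Walk a b₁) (P₂ : G.Walk a b₂) (P₃ : G.Walk a b₃),
    G.Adj b₁ b₂ ∧ G.Adj b₁ b₃ ∧ G.Adj b₂ b₃ ∧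
    P₁.IsPath ∧ P₂.IsPath ∧ P₃.IsPath ∧
    1 ≤ P₁.length ∧ 1 ≤ P₂.length ∧ 1 ≤ P₃.length ∧
    ((2 ≤ P₁.length ∧ 2 ≤ P₂.length) ∨ (2 ≤ P₁.length ∧ 2 ≤ P₃.length) ∨
      (2 ≤ P₂.length ∧ 2 ≤ P₃.length)) ∧
    (∀ v : V, v ∈ P₁.support → v ∈ P₂.support → v = a) ∧
    (∀ v : V, v ∈ P₁.support → v ∈ P₃.support → v = a) ∧
    (∀ v : V, v ∈ P₂.support → v ∈ P₃.support → v = a) ∧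
    (∀ v : V, v ∈ P₁.support ∨ v ∈ P₂.support ∨ v ∈ P₃.support) ∧
    (∀ u v : V, G.Adj u v ↔
      s(u, v) ∈ P₁.edges ∨ s(u, v) ∈ P₂.edges ∨ s(u, v) ∈ P₃.edges ∨
      s(u, v) = s(b₁, b₂) ∨ s(u, v) = s(b₁, b₃) ∨ s(u, v) = s(b₂, b₃))

/-- `G` is a prism: two disjoint triangles joined by three pairwise disjoint paths, with no
other vertices or edges. -/
def IsPrism (G : SimpleGraph V) : Prop :=
  ∃ (a₁ a₂ a₃ b₁ b₂ b₃ : V) (P₁ : G.Walk a₁ b₁) (P₂ : G.Walk a₂ b₂) (P₃ : G.Walk a₃ b₃),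
    G.Adj a₁ a₂ ∧ G.Adj a₁ a₃ ∧ G.Adj a₂ a₃ ∧
    G.Adj b₁ b₂ ∧ G.Adj b₁ b₃ ∧ G.Adj b₂ b₃ ∧
    P₁.IsPath ∧ P₂.IsPath ∧ P₃.IsPath ∧
    1 ≤ P₁.length ∧ 1 ≤ P₂.length ∧ 1 ≤ P₃.length ∧
    (∀ v : V, v ∈ P₁.support → v ∈ P₂.support → False) ∧
    (∀ v : V, v ∈ P₁.support → v ∈ P₃.support → False) ∧
    (∀ v : V, v ∈ P₂.support → v ∈ P₃.support → False) ∧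
    (∀ v : V, v ∈ P₁.support ∨ v ∈ P₂.support ∨ v ∈ P₃.support) ∧
    (∀ u v : V, G.Adj u v ↔
      s(u, v) ∈ P₁.edges ∨ s(u, v) ∈ P₂.edges ∨ s(u, v) ∈ P₃.edges ∨
      s(u, v) = s(a₁, a₂) ∨ s(u, v) = s(a₁, a₃) ∨ s(u, v) = s(a₂, a₃) ∨
      s(u, v) = s(b₁, b₂) ∨ s(u, v) = s(b₁, b₃) ∨ s(u, v) = s(b₂, b₃))

/-- `G` is a long prism: a prism other than the complement of `C₆`, i.e. a prism in which at
least one of the three paths has length at least two. -/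
def IsLongPrism (G : SimpleGraph V) : Prop :=
  ∃ (a₁ a₂ a₃ b₁ b₂ b₃ : V) (P₁ : G.Walk a₁ b₁) (P₂ : G.Walk a₂ b₂) (P₃ : G.Walk a₃ b₃),
    G.Adj a₁ a₂ ∧ G.Adj a₁ a₃ ∧ G.Adj a₂ a₃ ∧
    G.Adj b₁ b₂ ∧ G.Adj b₁ b₃ ∧ G.Adj b₂ b₃ ∧
    P₁.IsPath ∧ P₂.IsPath ∧ P₃.IsPath ∧
    1 ≤ P₁.length ∧ 1 ≤ P₂.length ∧ 1 ≤ P₃.length ∧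
    (2 ≤ P₁.length ∨ 2 ≤ P₂.length ∨ 2 ≤ P₃.length) ∧
    (∀ v : V, v ∈ P₁.support → v ∈ P₂.support → False) ∧
    (∀ v : V, v ∈ P₁.support → v ∈ P₃.support → False) ∧
    (∀ v : V, v ∈ P₂.support → v ∈ P₃.support → False) ∧
    (∀ v : V, v ∈ P₁.support ∨ v ∈ P₂.support ∨ v ∈ P₃.support) ∧
    (∀ u v : V, G.Adj u v ↔
      s(u, v) ∈ P₁.edges ∨ s(u, v) ∈ P₂.edges ∨ s(u, v) ∈ P₃.edges ∨
      s(u, v) = s(a₁, a₂) ∨ s(u, v) = s(a₁, a₃) ∨ s(u, v) = s(a₂, a₃) ∨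
      s(u, v) = s(b₁, b₂) ∨ s(u, v) = s(b₁, b₃) ∨ s(u, v) = s(b₂, b₃))

/-- `G` is a wheel: a hole (chordless cycle of length at least four) together with one
additional vertex having at least three neighbors on the hole. -/
def IsWheel (G : SimpleGraph V) : Prop :=
  ∃ (v x : V) (c : G.Walk x x),
    c.IsCycle ∧ 4 ≤ c.length ∧ v ∉ c.support ∧
    (∀ u : V, u = v ∨ u ∈ c.support) ∧
    (∀ u w : V, u ∈ c.support → w ∈ c.support → G.Adj u w → s(u, w) ∈ c.edges) ∧
    3 ≤ {u : V | u ∈ c.support ∧ G.Adj v u}.ncard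

/-- `G` is a broken wheel: a wheel in which the neighbors of the additional vertex induce a
disconnected subgraph of the hole. -/
def IsBrokenWheel (G : SimpleGraph V) : Prop :=
  ∃ (v x : V) (c : G.Walk x x),
    c.IsCycle ∧ 4 ≤ c.length ∧ v ∉ c.support ∧
    (∀ u : V, u = v ∨ u ∈ c.support) ∧
    (∀ u w : V, u ∈ c.support → w ∈ c.support → G.Adj u w → s(u, w) ∈ c.edges) ∧
    3 ≤ {u : V | u ∈ c.support ∧ G.Adj v u}.ncard ∧
    ¬ (G.induce {u : V | u ∈ c.support ∧ G.Adj v u}).Connected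

/-- `G` is diamond-free: it has no induced subgraph isomorphic to `K₄` minus an edge. -/
def DiamondFree (G : SimpleGraph V) : Prop :=
  ¬ ∃ a b c d : V, c ≠ d ∧ G.Adj a b ∧ G.Adj a c ∧ G.Adj a d ∧ G.Adj b c ∧ G.Adj b d ∧
    ¬ G.Adj c d

/-- The short `n`-prism: two `n`-vertex cliques joined by a perfect matching. -/
def completePrism (n : ℕ) : SimpleGraph (Fin n ⊕ Fin n) :=
  SimpleGraph.fromRel (fun x y =>
    match x, y with
    | Sum.inl _, Sum.inl _ => True
    | Sum.inr _, Sum.inr _ => True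
    | Sum.inl i, Sum.inr j => i = j
    | Sum.inr i, Sum.inl j => i = j)

/-- `G` is a complete prism, i.e. a short `n`-prism for some `n ≥ 3`. -/
def IsCompletePrism (G : SimpleGraph V) : Prop :=
  ∃ n : ℕ, 3 ≤ n ∧ Nonempty (G ≃g completePrism n)

/-- `G` is a cycle. -/
def IsCycleGraph (G : SimpleGraph V) : Prop :=
  ∃ n : ℕ, 3 ≤ n ∧ Nonempty (G ≃g cycleGraph n)

/-- `G` is a complete graph. -/
def IsCompleteGraph (G : SimpleGraph V) : Prop :=
  ∀ u v : V, u ≠ v → G.Adj u v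

/-- `G` has a clique-cutset. -/
def HasCliqueCutset (G : SimpleGraph V) : Prop :=
  ∃ K : Set V, G.IsClique K ∧ IsCutset G K




-- ===== auxiliary infrastructure =====
section Aux
variable {α β γ : Type}

variable {V : Type} {W : Type}

/-- walk within a set -/
def Linked (G : SimpleGraph V) (s : Set V) (a b : V) : Prop :=
  ∃ p : G.Walk a b, ∀ v ∈ p.support, v ∈ s

lemma Linked.refl {G : SimpleGraph V} {s : Set V} {a : V} (ha : a ∈ s) : Linked G s a a :=
  ⟨Walk.nil, by simp [ha]⟩

lemma Linked.symm {G : SimpleGraph V} {s : Set V} {a b : V} (h : Linked G s a b) :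
    Linked G s b a := by
  obtain ⟨p, hp⟩ := h
  exact ⟨p.reverse, by simpa using hp⟩

lemma Linked.trans {G : SimpleGraph V} {s : Set V} {a b c : V} (h : Linked G s a b)
    (h' : Linked G s b c) : Linked G s a c := by
  obtain ⟨p, hp⟩ := h; obtain ⟨q, hq⟩ := h'
  refine ⟨p.append q, ?_⟩
  intro v hv
  rcases (Walk.mem_support_append_iff _ _).1 hv with h | h
  · exact hp v h
  · exact hq v h

lemma Linked.mono {G : SimpleGraph V} {s t : Set V} (hst : s ⊆ t) {a b : V}
    (h : Linked G s a b) : Linked G t a b := by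
  obtain ⟨p, hp⟩ := h; exact ⟨p, fun v hv => hst (hp v hv)⟩

lemma Linked.of_adj {G : SimpleGraph V} {s : Set V} {a b : V} (h : G.Adj a b)
    (ha : a ∈ s) (hb : b ∈ s) : Linked G s a b :=
  ⟨Walk.cons h Walk.nil, by simp [ha, hb]⟩

/-- hom from induced subgraph to ambient graph -/
def induceHom' (G : SimpleGraph V) (s : Set V) : G.induce s →g G :=
  ⟨Subtype.val, fun h => h⟩

lemma linked_of_induce_walk {G : SimpleGraph V} {s : Set V} {x y : ↥s}
    (p : (G.induce s).Walk x y) : Linked G s x.val y.val := by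
  refine ⟨p.map (induceHom' G s), ?_⟩
  intro v hv
  change v ∈ (p.map (induceHom' G s)).support at hv
  rw [Walk.support_map] at hv
  obtain ⟨u, hu, rfl⟩ := List.mem_map.1 hv
  exact u.2

lemma reachable_induce_of_walk {G : SimpleGraph V} {s : Set V} :
    ∀ {a b : V} (p : G.Walk a b), (∀ v ∈ p.support, v ∈ s) → ∀ (ha : a ∈ s) (hb : b ∈ s),
      (G.induce s).Reachable ⟨a, ha⟩ ⟨b, hb⟩ := by
  intro a b p
  induction p with
  | nil => intro _ ha hb; exact Reachable.refl _
  | @cons a c b h p ih =>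
    intro hs ha hb
    have hc : c ∈ s := hs c (by simp)
    have : (G.induce s).Adj ⟨a, ha⟩ ⟨c, hc⟩ := h
    exact (this.reachable).trans (ih (fun v hv => hs v (by simp [hv])) hc hb)

lemma induce_connected_iff {G : SimpleGraph V} {s : Set V} :
    (G.induce s).Connected ↔ s.Nonempty ∧ ∀ a ∈ s, ∀ b ∈ s, Linked G s a b := by
  constructor
  · intro h
    refine ⟨?_, ?_⟩
    · obtain ⟨⟨x, hx⟩⟩ := h.nonempty; exact ⟨x, hx⟩
    · intro a ha b hb
      obtain ⟨p⟩ := h.preconnected ⟨a, ha⟩ ⟨b, hb⟩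
      exact linked_of_induce_walk p
  · rintro ⟨⟨x, hx⟩, h⟩
    rw [connected_iff]
    refine ⟨fun u v => ?_, ⟨⟨x, hx⟩⟩⟩
    obtain ⟨a, ha⟩ := u; obtain ⟨b, hb⟩ := v
    obtain ⟨p, hp⟩ := h a ha b hb
    exact reachable_induce_of_walk p hp ha hb

/-- induce-walk with support control -/
lemma exists_induce_walk_support {G : SimpleGraph V} {s : Set V} :
    ∀ {a b : V} (p : G.Walk a b) (_ : ∀ v ∈ p.support, v ∈ s) (ha : a ∈ s) (hb : b ∈ s),
      ∃ q : (G.induce s).Walk ⟨a, ha⟩ ⟨b, hb⟩, ∀ x ∈ q.support, x.val ∈ p.support := by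
  intro a b p
  induction p with
  | nil =>
    intro _ ha hb
    exact ⟨Walk.nil, by simp⟩
  | @cons a c b h p ih =>
    intro hs ha hb
    have hc : c ∈ s := hs c (by simp)
    obtain ⟨q, hq⟩ := ih (fun v hv => hs v (by simp [hv])) hc hb
    refine ⟨Walk.cons (by exact h : (G.induce s).Adj ⟨a, ha⟩ ⟨c, hc⟩) q, ?_⟩
    intro x hx
    change x ∈ (⟨a, ha⟩ : ↥s) :: q.support at hx
    rcases List.mem_cons.1 hx with rfl | hx
    · simp
    · simp [hq x hx]


variable {V : Type} {W : Type}


variable {α β : Type}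

@[simp] lemma join_adj_inl_inl {A : SimpleGraph α} {B : SimpleGraph β} {a b : α} :
    (join A B).Adj (Sum.inl a) (Sum.inl b) ↔ A.Adj a b := by
  rw [join, fromRel_adj]
  constructor
  · rintro ⟨h, h' | h'⟩
    · exact h'
    · exact h'.symm
  · intro h; exact ⟨by simp [h.ne], Or.inl h⟩

@[simp] lemma join_adj_inr_inr {A : SimpleGraph α} {B : SimpleGraph β} {a b : β} :
    (join A B).Adj (Sum.inr a) (Sum.inr b) ↔ B.Adj a b := by
  rw [join, fromRel_adj]
  constructor
  · rintro ⟨h, h' | h'⟩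
    · exact h'
    · exact h'.symm
  · intro h; exact ⟨by simp [h.ne], Or.inl h⟩

@[simp] lemma join_adj_inl_inr {A : SimpleGraph α} {B : SimpleGraph β} {a : α} {b : β} :
    (join A B).Adj (Sum.inl a) (Sum.inr b) := by
  rw [join, fromRel_adj]
  exact ⟨by simp, Or.inl trivial⟩

@[simp] lemma join_adj_inr_inl {A : SimpleGraph α} {B : SimpleGraph β} {a : β} {b : α} :
    (join A B).Adj (Sum.inr a) (Sum.inl b) := by
  rw [join, fromRel_adj]
  exact ⟨by simp, Or.inl trivial⟩

/-- congruence for join in second argument -/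
def joinCongr {A : SimpleGraph α} {G : SimpleGraph V} {H : SimpleGraph W}
    (e : G ≃g H) : join A G ≃g join A H where
  toEquiv := Equiv.sumCongr (Equiv.refl α) e.toEquiv
  map_rel_iff' := by
    rintro (a | a) (b | b) <;> simp [e.map_rel_iff]

def induceCongrSet (G : SimpleGraph V) {s t : Set V} (h : s = t) :
    G.induce s ≃g G.induce t where
  toEquiv := Equiv.setCongr h
  map_rel_iff' := by rintro ⟨a, ha⟩ ⟨b, hb⟩; exact Iff.rfl

/-- image of induced subgraph under an isomorphism -/
noncomputable def induceImageIso {G : SimpleGraph V} {H : SimpleGraph W} (e : G ≃g H) (s : Set V) :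
    G.induce s ≃g H.induce (⇑e '' s) where
  toEquiv := (e.toEquiv.image s)
  map_rel_iff' := by
    rintro ⟨a, ha⟩ ⟨b, hb⟩
    simp [Equiv.image, e.map_rel_iff]

/-- induced subgraph of induced subgraph -/
noncomputable def induceInduceIso (G : SimpleGraph V) (s : Set V) (t : Set ↥s) :
    (G.induce s).induce t ≃g G.induce (Subtype.val '' t) where
  toEquiv := (Equiv.Set.image Subtype.val t Subtype.val_injective)
  map_rel_iff' := by
    rintro ⟨a, ha⟩ ⟨b, hb⟩
    exact Iff.rfl

/-- induced on a subset of the `inr` side of a join is induced in the second factor -/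
noncomputable def inrPullIso (A : SimpleGraph α) (H : SimpleGraph W) (s : Set (α ⊕ W))
    (hs : s ⊆ Set.range Sum.inr) :
    H.induce (Sum.inr ⁻¹' s) ≃g (join A H).induce s := by
  refine ⟨Equiv.ofBijective (fun w => ⟨Sum.inr w.1, w.2⟩) ⟨?_, ?_⟩, ?_⟩
  · rintro ⟨a, ha⟩ ⟨b, hb⟩ h
    simpa [Subtype.ext_iff] using h
  · rintro ⟨x, hx⟩
    obtain ⟨w, rfl⟩ := hs hx
    exact ⟨⟨w, hx⟩, rfl⟩
  · rintro ⟨a, ha⟩ ⟨b, hb⟩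
    exact join_adj_inr_inr (A := A) (a := a) (b := b)

noncomputable def rangeInrIso (A : SimpleGraph α) (H : SimpleGraph W) :
    (join A H).induce (Set.range Sum.inr) ≃g H :=
  ((inrPullIso A H _ subset_rfl).symm).trans
    ((induceCongrSet H (by simp [Set.preimage_range])).trans H.induceUnivIso)

/-- a vertex adjacent to all of T: peel it off as a universal vertex -/
noncomputable def univIso1 (G : SimpleGraph V) (T : Set V) (z : V) (hz : z ∈ T)
    (hadj : ∀ v ∈ T, v ≠ z → G.Adj z v) :
    G.induce T ≃g join (⊥ : SimpleGraph (Fin 1)) (G.induce (T \ {z})) := by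
  classical
  refine ⟨⟨fun v => if h : v.1 = z then Sum.inl 0 else Sum.inr ⟨v.1, v.2, h⟩,
    Sum.elim (fun _ => ⟨z, hz⟩) (fun w => ⟨w.1, w.2.1⟩), ?_, ?_⟩, ?_⟩
  · rintro ⟨v, hv⟩
    by_cases h : v = z <;> simp [h]
  · rintro (i | w)
    · simp [Fin.ext_iff]
    · have h := w.2.2
      simp only [Set.mem_singleton_iff] at h
      simp [h]
  · rintro ⟨a, ha⟩ ⟨b, hb⟩
    rcases eq_or_ne a z with h1 | h1 <;> rcases eq_or_ne b z with h2 | h2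
    · simp only [Equiv.coe_fn_mk, dif_pos h1, dif_pos h2, join_adj_inl_inl, comap_adj, Function.Embedding.coe_subtype]
      rw [h1, h2]; simp
    · simp only [Equiv.coe_fn_mk, dif_pos h1, dif_neg h2, join_adj_inl_inr, comap_adj, Function.Embedding.coe_subtype]
      rw [h1]; simpa using hadj b hb h2
    · simp only [Equiv.coe_fn_mk, dif_neg h1, dif_pos h2, join_adj_inr_inl, comap_adj, Function.Embedding.coe_subtype]
      rw [h2]; simpa using (hadj a ha h1).symm
    · simp only [Equiv.coe_fn_mk, dif_neg h1, dif_neg h2, join_adj_inr_inr, comap_adj, Function.Embedding.coe_subtype]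

/-- two nonadjacent vertices adjacent to all the rest of T: peel off a 2K1 -/
noncomputable def univIso2 (G : SimpleGraph V) (T : Set V) (z z' : V) (hz : z ∈ T) (hz' : z' ∈ T)
    (hne : z ≠ z') (hnadj : ¬ G.Adj z z')
    (hadj : ∀ v ∈ T, v ≠ z → v ≠ z' → G.Adj z v ∧ G.Adj z' v) :
    G.induce T ≃g join (⊥ : SimpleGraph (Fin 2)) (G.induce (T \ {z, z'})) := by
  classical
  refine ⟨⟨fun v => if h0 : v.1 = z then Sum.inl 0 else if h : v.1 = z' then Sum.inl 1 else
      Sum.inr ⟨v.1, v.2, by simp [h0, h]⟩,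
    Sum.elim (fun i => if i = 0 then ⟨z, hz⟩ else ⟨z', hz'⟩) (fun w => ⟨w.1, w.2.1⟩),
    ?_, ?_⟩, ?_⟩
  · rintro ⟨v, hv⟩
    by_cases h1 : v = z
    · simp [h1]
    · by_cases h2 : v = z'
      · simp only [Equiv.coe_fn_mk, dif_neg h1, dif_pos h2, Sum.elim_inl,
          if_neg (by decide : ¬ (1 : Fin 2) = 0)]
        exact Subtype.ext h2.symm
      · simp [h1, h2]
  · rintro (i | w)
    · rcases i with ⟨iv, hi⟩
      interval_cases iv
      · simp
      · simp only [Sum.elim_inl]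
        have h0 : (if (⟨1, hi⟩ : Fin 2) = 0 then (⟨z, hz⟩ : ↥T) else ⟨z', hz'⟩) = ⟨z', hz'⟩ :=
          if_neg (by simp [Fin.ext_iff])
        simp only [h0]
        simp [Fin.ext_iff]
        exact fun h => hne h.symm
    · have h := w.2.2
      simp only [Set.mem_insert_iff, Set.mem_singleton_iff, not_or] at h
      simp [h.1, h.2]
  · rintro ⟨a, ha⟩ ⟨b, hb⟩
    rcases eq_or_ne a z with h1 | h1
    · rcases eq_or_ne b z with h2 | h2
      · simp only [Equiv.coe_fn_mk, dif_pos h1, dif_pos h2, join_adj_inl_inl, comap_adj, Function.Embedding.coe_subtype]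
        rw [h1, h2]; simp
      · rcases eq_or_ne b z' with h4 | h4
        · simp only [Equiv.coe_fn_mk, dif_pos h1, dif_neg h2, dif_pos h4, join_adj_inl_inl,
            comap_adj, Function.Embedding.coe_subtype]
          rw [h1, h4]; exact iff_of_false (by simp) hnadj
        · simp only [Equiv.coe_fn_mk, dif_pos h1, dif_neg h2, dif_neg h4, join_adj_inl_inr,
            comap_adj, Function.Embedding.coe_subtype]
          rw [h1]; simpa using (hadj b hb h2 h4).1
    · rcases eq_or_ne a z' with h3 | h3
      · rcases eq_or_ne b z with h2 | h2
        · simp only [Equiv.coe_fn_mk, dif_neg h1, dif_pos h3, dif_pos h2, join_adj_inl_inl,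
            comap_adj, Function.Embedding.coe_subtype]
          rw [h3, h2]; exact iff_of_false (by simp) (fun h => hnadj h.symm)
        · rcases eq_or_ne b z' with h4 | h4
          · simp only [Equiv.coe_fn_mk, dif_neg h1, dif_pos h3, dif_neg h2, dif_pos h4,
              join_adj_inl_inl, comap_adj, Function.Embedding.coe_subtype]
            rw [h3, h4]; simp
          · simp only [Equiv.coe_fn_mk, dif_neg h1, dif_pos h3, dif_neg h2, dif_neg h4,
              join_adj_inl_inr, comap_adj, Function.Embedding.coe_subtype]
            rw [h3]; simpa using (hadj b hb h2 h4).2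
      · rcases eq_or_ne b z with h2 | h2
        · simp only [Equiv.coe_fn_mk, dif_neg h1, dif_neg h3, dif_pos h2, join_adj_inr_inl,
            comap_adj, Function.Embedding.coe_subtype]
          rw [h2]; simpa using ((hadj a ha h1 h3).1).symm
        · rcases eq_or_ne b z' with h4 | h4
          · simp only [Equiv.coe_fn_mk, dif_neg h1, dif_neg h3, dif_neg h2, dif_pos h4,
              join_adj_inr_inl, comap_adj, Function.Embedding.coe_subtype]
            rw [h4]; simpa using ((hadj a ha h1 h3).2).symm
          · simp only [Equiv.coe_fn_mk, dif_neg h1, dif_neg h3, dif_neg h2, dif_neg h4,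
              join_adj_inr_inr, comap_adj, Function.Embedding.coe_subtype]



-- ===== induced minor infrastructure =====

lemma isIMModel_id (G : SimpleGraph V) : IsIMModel G G (fun w => {w}) := by
  refine ⟨fun w => ⟨w, rfl⟩, ?_, ?_, ?_⟩
  · intro u w h
    simp [Set.disjoint_singleton_left, h]
  · intro w
    rw [induce_connected_iff]
    exact ⟨⟨w, rfl⟩, fun a ha b hb => by
      simp only [Set.mem_singleton_iff] at ha hb; subst ha; subst hb; exact Linked.refl rfl⟩
  · intro u w h
    constructor
    · intro hadj; exact ⟨u, rfl, w, rfl, hadj⟩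
    · rintro ⟨a, ha, b, hb, hadj⟩
      simp only [Set.mem_singleton_iff] at ha hb
      subst ha; subst hb; exact hadj

lemma IsIMModel.restrict {G : SimpleGraph V} {F : SimpleGraph β} {X : β → Set V}
    (hX : IsIMModel G F X) (s : Set β) :
    IsIMModel G (F.induce s) (fun v => X v.1) := by
  obtain ⟨h1, h2, h3, h4⟩ := hX
  refine ⟨fun v => h1 v.1, ?_, fun v => h3 v.1, ?_⟩
  · intro u w h
    exact h2 u.1 w.1 (fun hc => h (Subtype.ext hc))
  · intro u w h
    exact h4 u.1 w.1 (fun hc => h (Subtype.ext hc))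

lemma isInducedMinor_induce (G : SimpleGraph V) (s : Set V) :
    IsInducedMinor (G.induce s) G :=
  ⟨_, (isIMModel_id G).restrict s⟩

lemma IsInducedMinor.trans {F : SimpleGraph β} {M : SimpleGraph W} {G : SimpleGraph V}
    (h1 : IsInducedMinor F M) (h2 : IsInducedMinor M G) : IsInducedMinor F G := by
  obtain ⟨X, hXne, hXdisj, hXconn, hXadj⟩ := h1
  obtain ⟨Y, hYne, hYdisj, hYconn, hYadj⟩ := h2
  refine ⟨fun w => ⋃ m ∈ X w, Y m, ?_, ?_, ?_, ?_⟩
  · intro w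
    obtain ⟨m, hm⟩ := hXne w
    obtain ⟨y, hy⟩ := hYne m
    exact ⟨y, Set.mem_biUnion hm hy⟩
  · intro u w h
    rw [Set.disjoint_left]
    rintro x hx hx'
    simp only [Set.mem_iUnion] at hx hx'
    obtain ⟨m, hm, hxm⟩ := hx
    obtain ⟨m', hm', hxm'⟩ := hx'
    rcases eq_or_ne m m' with rfl | hne
    · exact Set.disjoint_left.1 (hXdisj u w h) hm hm'
    · exact Set.disjoint_left.1 (hYdisj m m' hne) hxm hxm'
  · intro w
    rw [induce_connected_iff]
    have hsub : ∀ {n : W}, n ∈ X w → Y n ⊆ ⋃ m ∈ X w, Y m := by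
      intro n hn z hz; exact Set.mem_biUnion hn hz
    constructor
    · obtain ⟨m, hm⟩ := hXne w
      obtain ⟨y, hy⟩ := hYne m
      exact ⟨y, Set.mem_biUnion hm hy⟩
    · intro x hx y hy
      simp only [Set.mem_iUnion] at hx hy
      obtain ⟨m, hm, hxm⟩ := hx
      obtain ⟨m', hm', hym'⟩ := hy
      have walkkey : ∀ {n n' : W} (q : M.Walk n n'), (∀ v ∈ q.support, v ∈ X w) →
          ∀ c ∈ Y n, ∀ d ∈ Y n', Linked G (⋃ m ∈ X w, Y m) c d := by
        intro n n' q
        induction q with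
        | @nil x =>
          intro hq c hc d hd
          have hn : x ∈ X w := hq x (by simp)
          exact ((induce_connected_iff.1 (hYconn x)).2 c hc d hd).mono (hsub hn)
        | @cons x e x' hadj q ih =>
          intro hq c hc d hd
          have hn : x ∈ X w := hq x (by simp)
          have he : e ∈ X w := hq e (by simp)
          obtain ⟨u', hu', v', hv', huv⟩ := (hYadj x e hadj.ne).1 hadj
          have l1 : Linked G (⋃ m ∈ X w, Y m) c u' :=
            ((induce_connected_iff.1 (hYconn x)).2 c hc u' hu').mono (hsub hn)
          have l2 : Linked G (⋃ m ∈ X w, Y m) u' v' :=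
            Linked.of_adj huv (hsub hn hu') (hsub he hv')
          have l3 := ih (fun v hv => hq v (by simp [hv])) v' hv' d hd
          exact (l1.trans l2).trans l3
      obtain ⟨q, hq⟩ := (induce_connected_iff.1 (hXconn w)).2 m hm m' hm'
      exact walkkey q hq x hxm y hym'
  · intro u w h
    constructor
    · intro hadj
      obtain ⟨m, hm, m', hm', hmm'⟩ := (hXadj u w h).1 hadj
      have hne : m ≠ m' := fun hc => Set.disjoint_left.1 (hXdisj u w h) hm (hc ▸ hm')
      obtain ⟨c, hc, d, hd, hcd⟩ := (hYadj m m' hne).1 hmm'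
      exact ⟨c, Set.mem_biUnion hm hc, d, Set.mem_biUnion hm' hd, hcd⟩
    · rintro ⟨c, hc, d, hd, hcd⟩
      simp only [Set.mem_iUnion] at hc hd
      obtain ⟨m, hm, hcm⟩ := hc
      obtain ⟨m', hm', hdm'⟩ := hd
      have hne : m ≠ m' := by
        rintro rfl
        exact Set.disjoint_left.1 (hXdisj u w h) hm hm'
      have : M.Adj m m' := (hYadj m m' hne).2 ⟨c, hcm, d, hdm', hcd⟩
      exact (hXadj u w h).2 ⟨m, hm, m', hm', this⟩

lemma IsInducedMinor.of_iso_right {F : SimpleGraph β} {G : SimpleGraph V}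
    {G' : SimpleGraph W} (h : IsInducedMinor F G) (e : G ≃g G') : IsInducedMinor F G' := by
  obtain ⟨X, hXne, hXdisj, hXconn, hXadj⟩ := h
  refine ⟨fun w => ⇑e '' X w, fun w => (hXne w).image _, ?_, ?_, ?_⟩
  · intro u w hne
    exact (Set.disjoint_image_iff e.injective).2 (hXdisj u w hne)
  · intro w
    exact ((induceImageIso e (X w)).connected_iff).1 (hXconn w)
  · intro u w hne
    rw [hXadj u w hne]
    constructor
    · rintro ⟨a, ha, b, hb, hab⟩
      exact ⟨e a, Set.mem_image_of_mem _ ha, e b, Set.mem_image_of_mem _ hb,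
        e.map_adj_iff.2 hab⟩
    · rintro ⟨a', ⟨a, ha, rfl⟩, b', ⟨b, hb, rfl⟩, hab⟩
      exact ⟨a, ha, b, hb, e.map_adj_iff.1 hab⟩

lemma IsInducedMinor.of_iso_left {F : SimpleGraph β} {F' : SimpleGraph γ}
    {G : SimpleGraph V} (e : F' ≃g F) (h : IsInducedMinor F G) : IsInducedMinor F' G := by
  obtain ⟨X, hXne, hXdisj, hXconn, hXadj⟩ := h
  refine ⟨fun w => X (e w), fun w => hXne _, ?_, fun w => hXconn _, ?_⟩
  · intro u w hne
    exact hXdisj _ _ (fun hc => hne (e.injective hc))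
  · intro u w hne
    rw [← e.map_adj_iff]
    exact hXadj _ _ (fun hc => hne (e.injective hc))

lemma IsInducedMinor.card_le [Finite V] [Finite β] {F : SimpleGraph β} {G : SimpleGraph V}
    (h : IsInducedMinor F G) : Nat.card β ≤ Nat.card V := by
  obtain ⟨X, hXne, hXdisj, _, _⟩ := h
  set f : β → V := fun w => (hXne w).some with hf
  have hmem : ∀ w, f w ∈ X w := fun w => (hXne w).some_mem
  have : Function.Injective f := by
    intro u w huw
    by_contra hne
    have h2 := hmem w
    rw [← huw] at h2
    exact Set.disjoint_left.1 (hXdisj u w hne) (hmem u) h2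
  exact Nat.card_le_card_of_injective _ this

lemma IsInducedMinor.iso_of_card_eq [Finite V] [Finite β] {F : SimpleGraph β}
    {G : SimpleGraph V} (h : IsInducedMinor F G) (hc : Nat.card β = Nat.card V) :
    Nonempty (F ≃g G) := by
  obtain ⟨X, hXne, hXdisj, _, hXadj⟩ := h
  set f : β → V := fun w => (hXne w).some with hf
  have hmem : ∀ w, f w ∈ X w := fun w => (hXne w).some_mem
  have hinj : Function.Injective f := by
    intro u w huw
    by_contra hne
    have h2 := hmem w
    rw [← huw] at h2
    exact Set.disjoint_left.1 (hXdisj u w hne) (hmem u) h2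
  have hbij : Function.Bijective f := (Nat.bijective_iff_injective_and_card f).2 ⟨hinj, hc⟩
  have hsing : ∀ w, X w = {f w} := by
    intro w
    apply Set.eq_singleton_iff_unique_mem.2 ⟨hmem w, ?_⟩
    intro x hx
    obtain ⟨w', rfl⟩ := hbij.2 x
    by_contra hne
    have hww : w' ≠ w := fun hc' => hne (by rw [hc'])
    exact Set.disjoint_left.1 (hXdisj w' w hww) (hmem w') hx
  refine ⟨⟨Equiv.ofBijective f hbij, ?_⟩⟩
  intro u w
  simp only [Equiv.ofBijective_apply]
  rcases eq_or_ne u w with rfl | hne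
  · simp
  · rw [hXadj u w hne]
    simp [hsing]

lemma nonempty_iso_card_eq {F : SimpleGraph β} {G : SimpleGraph V} (e : F ≃g G) :
    Nat.card β = Nat.card V := Nat.card_congr e.toEquiv

lemma isEmpty_iso_of_card_ne {F : SimpleGraph β} {G : SimpleGraph V}
    (h : Nat.card β ≠ Nat.card V) : IsEmpty (F ≃g G) :=
  ⟨fun e => h (nonempty_iso_card_eq e)⟩

/-- lifting an induced minor through a join -/
lemma IsInducedMinor.join_lift {A : SimpleGraph α} {X : SimpleGraph β} {H : SimpleGraph W}
    (h : IsInducedMinor X H) : IsInducedMinor (join A X) (join A H) := by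
  obtain ⟨Y, hYne, hYdisj, hYconn, hYadj⟩ := h
  refine ⟨Sum.elim (fun a => {Sum.inl a}) (fun w => Sum.inr '' Y w), ?_, ?_, ?_, ?_⟩
  · rintro (a | w)
    · exact ⟨Sum.inl a, rfl⟩
    · exact (hYne w).image _
  · rintro (a | w) (a' | w') h <;> simp only [Sum.elim_inl, Sum.elim_inr]
    · simp only [Set.disjoint_singleton_left, Set.mem_singleton_iff]
      exact fun hc => h (congrArg Sum.inl (Sum.inl_injective hc))
    · simp only [Set.disjoint_singleton_left]
      rintro ⟨y, hy, hc⟩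
      exact absurd hc (by simp)
    · rw [Set.disjoint_singleton_right]
      rintro ⟨y, hy, hc⟩
      exact absurd hc (by simp)
    · rw [Set.disjoint_image_iff Sum.inr_injective]
      exact hYdisj w w' (fun hc => h (by rw [hc]))
  · rintro (a | w)
    · simp only [Sum.elim_inl]
      rw [induce_connected_iff]
      refine ⟨⟨_, rfl⟩, ?_⟩
      intro x hx y hy
      simp only [Set.mem_singleton_iff] at hx hy
      subst hx; subst hy; exact Linked.refl rfl
    · simp only [Sum.elim_inr]
      have h1 : (Sum.inr : W → α ⊕ W) ⁻¹' (Sum.inr '' Y w) = Y w :=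
        Set.preimage_image_eq _ Sum.inr_injective
      exact (Iso.connected_iff ((induceCongrSet H h1.symm).trans
        (inrPullIso A H _ (by rintro x ⟨y, hy, rfl⟩; exact ⟨y, rfl⟩)))).1
        (hYconn w)
  · rintro (a | w) (a' | w') hne <;> simp only [Sum.elim_inl, Sum.elim_inr]
    · constructor
      · intro hadj
        refine ⟨Sum.inl a, rfl, Sum.inl a', rfl, ?_⟩
        rwa [join_adj_inl_inl] at hadj ⊢
      · rintro ⟨x, hx, y, hy, hadj⟩
        simp only [Set.mem_singleton_iff] at hx hy
        subst hx; subst hy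
        rwa [join_adj_inl_inl] at hadj ⊢
    · refine iff_of_true join_adj_inl_inr ?_
      obtain ⟨y0, hy0⟩ := hYne w'
      exact ⟨Sum.inl a, rfl, Sum.inr y0, Set.mem_image_of_mem _ hy0, join_adj_inl_inr⟩
    · refine iff_of_true join_adj_inr_inl ?_
      obtain ⟨y0, hy0⟩ := hYne w
      exact ⟨Sum.inr y0, Set.mem_image_of_mem _ hy0, Sum.inl a', rfl, join_adj_inr_inl⟩
    · have hww : w ≠ w' := fun hc => hne (by rw [hc])
      rw [join_adj_inr_inr, hYadj w w' hww]
      constructor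
      · rintro ⟨c, hc, d, hd, hcd⟩
        exact ⟨Sum.inr c, Set.mem_image_of_mem _ hc, Sum.inr d, Set.mem_image_of_mem _ hd,
          by rwa [join_adj_inr_inr]⟩
      · rintro ⟨x, ⟨c, hc, rfl⟩, y, ⟨d, hd, rfl⟩, hxy⟩
        exact ⟨c, hc, d, hd, by rwa [join_adj_inr_inr] at hxy⟩

/-- pulling back a model whose branch sets lie in the `inr` side of a join -/
lemma im_of_model_subset_inr {A : SimpleGraph α} {H : SimpleGraph W} {F : SimpleGraph β}
    {Ψ : β → Set (α ⊕ W)} (hΨ : IsIMModel (join A H) F Ψ)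
    (hsub : ∀ v, Ψ v ⊆ Set.range Sum.inr) : IsInducedMinor F H := by
  obtain ⟨h1, h2, h3, h4⟩ := hΨ
  refine ⟨fun v => Sum.inr ⁻¹' Ψ v, ?_, ?_, ?_, ?_⟩
  · intro v
    obtain ⟨x, hx⟩ := h1 v
    obtain ⟨y, rfl⟩ := hsub v hx
    exact ⟨y, hx⟩
  · intro u w hne
    rw [Set.disjoint_left]
    intro y hy hy'
    exact Set.disjoint_left.1 (h2 u w hne) hy hy'
  · intro v
    exact ((inrPullIso A H (Ψ v) (hsub v)).connected_iff).2 (h3 v)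
  · intro u w hne
    rw [h4 u w hne]
    constructor
    · rintro ⟨x, hx, y, hy, hxy⟩
      obtain ⟨c, rfl⟩ := hsub u hx
      obtain ⟨d, rfl⟩ := hsub w hy
      exact ⟨c, hx, d, hy, by rwa [join_adj_inr_inr] at hxy⟩
    · rintro ⟨c, hc, d, hd, hcd⟩
      exact ⟨Sum.inr c, hc, Sum.inr d, hd, by rwa [join_adj_inr_inr]⟩


-- ===== minimal separator infrastructure =====

lemma induce_singleton_connected (G : SimpleGraph V) (v : V) : (G.induce {v}).Connected := by
  rw [induce_connected_iff]
  exact ⟨⟨v, rfl⟩, fun a ha b hb => by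
    simp only [Set.mem_singleton_iff] at ha hb; subst ha; subst hb; exact Linked.refl rfl⟩

lemma IsMinSep.ne {G : SimpleGraph V} {a b : V} {T : Set V} (h : IsMinSep G a b T) :
    a ≠ b := by
  rintro rfl
  exact h.1.2.2 ⟨Walk.nil, by simpa using h.1.1⟩

lemma fin2_cases (i : Fin 2) : i = 0 ∨ i = 1 := by omega

/-- the key classical lemma: contracting the two sides of a minimal separator yields
`2K₁ ∨ G[T]` as an induced minor -/
lemma minsep_join_im {G : SimpleGraph V} {a b : V} {T : Set V} (h : IsMinSep G a b T) :
    IsInducedMinor (join (⊥ : SimpleGraph (Fin 2)) (G.induce T)) G := by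
  classical
  obtain ⟨⟨haT, hbT, hsep⟩, hmin⟩ := h
  set Ra := {v | ConnAvoid G T a v} with hRa
  set Rb := {v | ConnAvoid G T b v} with hRb
  have haRa : a ∈ Ra := ⟨Walk.nil, by simpa using haT⟩
  have hbRb : b ∈ Rb := ⟨Walk.nil, by simpa using hbT⟩
  have hRaT : ∀ v ∈ Ra, v ∉ T := by
    rintro v ⟨p, hp⟩; exact hp v (Walk.end_mem_support p)
  have hRbT : ∀ v ∈ Rb, v ∉ T := by
    rintro v ⟨p, hp⟩; exact hp v (Walk.end_mem_support p)
  have hdisj : ∀ u ∈ Ra, ∀ v ∈ Rb, ¬ (u = v ∨ G.Adj u v) := by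
    rintro u ⟨p, hp⟩ v ⟨q, hq⟩ hcase
    apply hsep
    rcases hcase with rfl | hadj
    · refine ⟨p.append q.reverse, ?_⟩
      intro x hx
      rcases (Walk.mem_support_append_iff _ _).1 hx with hh | hh
      · exact hp x hh
      · exact hq x (by simpa using hh)
    · refine ⟨(p.append (Walk.cons hadj Walk.nil)).append q.reverse, ?_⟩
      intro x hx
      rcases (Walk.mem_support_append_iff _ _).1 hx with hh | hh
      · rcases (Walk.mem_support_append_iff _ _).1 hh with hh' | hh'
        · exact hp x hh'
        · simp only [Walk.support_cons, Walk.support_nil, List.mem_cons,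
            List.mem_singleton] at hh'
          rcases hh' with rfl | rfl | hfalse
          · exact hp x (Walk.end_mem_support p)
          · exact hq x (Walk.end_mem_support q)
          · exact absurd hfalse List.not_mem_nil
      · exact hq x (by simpa using hh)
  have hprefix : ∀ {x v : V} (p : G.Walk x v), (∀ y ∈ p.support, y ∉ T) →
      ∀ w ∈ p.support, ConnAvoid G T x w := by
    intro x v p hp w hw
    exact ⟨p.takeUntil w hw, fun y hy => hp y (p.support_takeUntil_subset hw hy)⟩
  have hconnR : ∀ (x : V), x ∉ T →
      (G.induce {v | ConnAvoid G T x v}).Connected := by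
    intro x hx
    rw [induce_connected_iff]
    refine ⟨⟨x, ⟨Walk.nil, by simpa using hx⟩⟩, ?_⟩
    intro u hu v hv
    have l1 : Linked G {v | ConnAvoid G T x v} x u := by
      obtain ⟨p, hp⟩ := hu
      exact ⟨p, fun y hy => hprefix p hp y hy⟩
    have l2 : Linked G {v | ConnAvoid G T x v} x v := by
      obtain ⟨p, hp⟩ := hv
      exact ⟨p, fun y hy => hprefix p hp y hy⟩
    exact l1.symm.trans l2
  have hnbr : ∀ {x : V}, x ∉ T → ∀ t ∈ T, ∀ {y : V} (p : G.Walk x y),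
      (∀ v ∈ p.support, v ∉ T \ {t}) → t ∈ p.support →
      ∃ c, G.Adj t c ∧ ConnAvoid G T x c := by
    intro x hx t ht y p hp htp
    set q := p.takeUntil t htp with hqdef
    have hcount := p.count_support_takeUntil_eq_one htp
    have hxt : x ≠ t := fun hc => hx (hc ▸ ht)
    obtain ⟨c, hadj, r, hr⟩ := Walk.exists_eq_cons_of_ne (fun hc => hxt hc.symm) q.reverse
    have hsupp : q.reverse.support = t :: r.support := by rw [hr, Walk.support_cons]
    have hcount2 : q.reverse.support.count t = 1 := by
      rw [Walk.support_reverse, List.count_reverse]; exact hcount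
    have htr : t ∉ r.support := by
      rw [hsupp, List.count_cons_self] at hcount2
      exact List.count_eq_zero.1 (by omega)
    have hrT : ∀ v ∈ r.support, v ∉ T := by
      intro v hv hvT
      have hvq : v ∈ q.support := by
        rw [← List.mem_reverse, ← Walk.support_reverse, hsupp]
        exact List.mem_cons_of_mem _ hv
      have := hp v (p.support_takeUntil_subset htp hvq)
      exact this ⟨hvT, fun hc => htr (hc ▸ hv)⟩
    refine ⟨c, hadj, ⟨r.reverse, ?_⟩⟩
    intro v hv
    rw [Walk.support_reverse, List.mem_reverse] at hv
    exact hrT v hv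
  have hnbrs : ∀ t : ↥T, (∃ c ∈ Ra, G.Adj t.1 c) ∧ (∃ c ∈ Rb, G.Adj t.1 c) := by
    rintro ⟨t, ht⟩
    have hTt : T \ {t} ⊂ T := Set.sdiff_singleton_ssubset.2 ht
    have hC : ConnAvoid G (T \ {t}) a b := by
      by_contra hCC
      exact hmin _ hTt ⟨fun hh => haT hh.1, fun hh => hbT hh.1, hCC⟩
    obtain ⟨p, hp⟩ := hC
    have htp : t ∈ p.support := by
      by_contra htp
      refine hsep ⟨p, fun v hv hvT => ?_⟩
      rcases eq_or_ne v t with rfl | hvt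
      · exact htp hv
      · exact hp v hv ⟨hvT, hvt⟩
    obtain ⟨c, hc1, hc2⟩ := hnbr haT t ht p hp htp
    obtain ⟨d, hd1, hd2⟩ := hnbr hbT t ht p.reverse
      (by intro v hv; rw [Walk.support_reverse, List.mem_reverse] at hv; exact hp v hv)
      (by rw [Walk.support_reverse, List.mem_reverse]; exact htp)
    exact ⟨⟨c, hc2, hc1⟩, ⟨d, hd2, hd1⟩⟩
  refine ⟨Sum.elim (fun i => if i = (0 : Fin 2) then Ra else Rb) (fun t => {t.1}),
    ?_, ?_, ?_, ?_⟩
  · rintro (i | t)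
    · rcases fin2_cases i with rfl | rfl
      · simpa using ⟨a, haRa⟩
      · simpa using ⟨b, hbRb⟩
    · exact ⟨t.1, rfl⟩
  · have hRaRb : Disjoint Ra Rb := by
      rw [Set.disjoint_left]
      intro u hu hu'
      exact hdisj u hu u hu' (Or.inl rfl)
    rintro (i | t) (j | t') hne <;> simp only [Sum.elim_inl, Sum.elim_inr]
    · have hij : i ≠ j := fun hc => hne (by rw [hc])
      rcases fin2_cases i with rfl | rfl <;> rcases fin2_cases j with rfl | rfl
      · exact absurd rfl hij
      · simp only [if_pos rfl, if_neg one_ne_zero]; exact hRaRb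
      · simp only [if_pos rfl, if_neg one_ne_zero]; exact hRaRb.symm
      · exact absurd rfl hij
    · rcases fin2_cases i with rfl | rfl <;> simp only [if_pos rfl, if_neg one_ne_zero] <;>
        rw [Set.disjoint_singleton_right]
      · exact fun hmem => hRaT t'.1 hmem t'.2
      · exact fun hmem => hRbT t'.1 hmem t'.2
    · rcases fin2_cases j with rfl | rfl <;> simp only [if_pos rfl, if_neg one_ne_zero] <;>
        rw [Set.disjoint_singleton_left]
      · exact fun hmem => hRaT t.1 hmem t.2
      · exact fun hmem => hRbT t.1 hmem t.2
    · rw [Set.disjoint_singleton_left, Set.mem_singleton_iff]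
      exact fun hc => hne (by rw [Subtype.ext hc])
  · rintro (i | t)
    · rcases fin2_cases i with rfl | rfl
      · simpa using hconnR a haT
      · simpa using hconnR b hbT
    · exact induce_singleton_connected G t.1
  · rintro (i | t) (j | t') hne
    · have hij : i ≠ j := fun hc => hne (by rw [hc])
      refine iff_of_false (by simp) ?_
      rintro ⟨x, hx, y, hy, hxy⟩
      simp only [Sum.elim_inl] at hx hy
      rcases fin2_cases i with rfl | rfl <;> rcases fin2_cases j with rfl | rfl
      · exact absurd rfl hij
      · simp only [if_pos rfl, if_neg one_ne_zero] at hx hy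
        exact hdisj x hx y hy (Or.inr hxy)
      · simp only [if_pos rfl, if_neg one_ne_zero] at hx hy
        exact hdisj y hy x hx (Or.inr hxy.symm)
      · exact absurd rfl hij
    · refine iff_of_true join_adj_inl_inr ?_
      simp only [Sum.elim_inl, Sum.elim_inr]
      rcases fin2_cases i with rfl | rfl
      · obtain ⟨c, hc, hadj⟩ := (hnbrs t').1
        exact ⟨c, by simpa using hc, t'.1, rfl, hadj.symm⟩
      · obtain ⟨c, hc, hadj⟩ := (hnbrs t').2
        exact ⟨c, by simpa using hc, t'.1, rfl, hadj.symm⟩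
    · refine iff_of_true join_adj_inr_inl ?_
      simp only [Sum.elim_inl, Sum.elim_inr]
      rcases fin2_cases j with rfl | rfl
      · obtain ⟨c, hc, hadj⟩ := (hnbrs t).1
        exact ⟨t.1, rfl, c, by simpa using hc, hadj⟩
      · obtain ⟨c, hc, hadj⟩ := (hnbrs t).2
        exact ⟨t.1, rfl, c, by simpa using hc, hadj⟩
    · simp only [Sum.elim_inr, join_adj_inr_inr, comap_adj,
        Function.Embedding.coe_subtype]
      constructor
      · intro hadj
        exact ⟨t.1, rfl, t'.1, rfl, hadj⟩
      · rintro ⟨x, hx, y, hy, hxy⟩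
        simp only [Set.mem_singleton_iff] at hx hy
        subst hx; subst hy; exact hxy

/-- the inr side is a minimal separator of `2K₁ ∨ H` -/
lemma rangeInr_isMinimalSeparator (H : SimpleGraph W) :
    IsMinimalSeparator (join (⊥ : SimpleGraph (Fin 2)) H) (Set.range Sum.inr) := by
  refine ⟨Sum.inl 0, Sum.inl 1, by simp [Fin.ext_iff], by simp, ⟨⟨by simp, by simp, ?_⟩, ?_⟩⟩
  · rintro ⟨p, hp⟩
    cases p with
    | @cons _ x _ hadj q =>
      rcases x with j | w
      · simpa using hadj
      · exact hp (Sum.inr w) (by simp) ⟨w, rfl⟩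
  · intro T hT hsep
    obtain ⟨x, hx1, hx2⟩ := Set.exists_of_ssubset hT
    obtain ⟨w, rfl⟩ := hx1
    refine hsep.2.2 ⟨Walk.cons (join_adj_inl_inr (b := w))
      (Walk.cons (join_adj_inr_inl (a := w)) Walk.nil), ?_⟩
    intro v hv
    simp only [Walk.support_cons, Walk.support_nil, List.mem_cons, List.mem_singleton] at hv
    rcases hv with rfl | rfl | rfl | hfalse
    · exact fun hmem => by simpa using hT.1 hmem
    · exact hx2
    · exact fun hmem => by simpa using hT.1 hmem
    · exact absurd hfalse List.not_mem_nil

-- ===== transfer of separators along isomorphisms =====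

lemma ConnAvoid.map {G : SimpleGraph V} {G' : SimpleGraph W} (e : G ≃g G') {S : Set V}
    {x y : V} : ConnAvoid G S x y → ConnAvoid G' (⇑e '' S) (e x) (e y) := by
  rintro ⟨p, hp⟩
  refine ⟨p.map e.toHom, ?_⟩
  intro v hv
  rw [Walk.support_map] at hv
  obtain ⟨u, hu, rfl⟩ := List.mem_map.1 hv
  rintro ⟨u', hu', heq⟩
  exact hp u hu ((e.injective heq) ▸ hu')

lemma IsSep.map {G : SimpleGraph V} {G' : SimpleGraph W} (e : G ≃g G') {x y : V}
    {T : Set V} (h : IsSep G x y T) : IsSep G' (e x) (e y) (⇑e '' T) := by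
  obtain ⟨hx, hy, hC⟩ := h
  refine ⟨?_, ?_, ?_⟩
  · rintro ⟨u, hu, heq⟩; exact hx ((e.injective heq) ▸ hu)
  · rintro ⟨u, hu, heq⟩; exact hy ((e.injective heq) ▸ hu)
  · intro hCC
    apply hC
    have := hCC.map e.symm
    simp only [RelIso.symm_apply_apply] at this
    rwa [show ⇑e.symm '' (⇑e '' T) = T from by
      rw [← Set.image_comp]; simp] at this

lemma IsMinSep.map {G : SimpleGraph V} {G' : SimpleGraph W} (e : G ≃g G') {x y : V}
    {T : Set V} (h : IsMinSep G x y T) : IsMinSep G' (e x) (e y) (⇑e '' T) := by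
  obtain ⟨hsep, hmin⟩ := h
  refine ⟨hsep.map e, ?_⟩
  intro T' hT' hsep'
  have h1 : ⇑e.symm '' T' ⊂ T := by
    constructor
    · rintro u ⟨u', hu', heq⟩
      obtain ⟨t, ht, rfl⟩ := hT'.1 hu'
      rw [← heq]
      simpa using ht
    · intro hsub
      apply hT'.2
      rintro x' hx'
      obtain ⟨t, ht, rfl⟩ := hx'
      obtain ⟨u, hu, heq⟩ := hsub ht
      have h3 : e (e.symm u) = e t := congrArg e heq
      simp only [RelIso.apply_symm_apply] at h3
      rwa [← h3]
  exact hmin _ h1 (by simpa using hsep'.map e.symm)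

lemma IsMinimalSeparator.map {G : SimpleGraph V} {G' : SimpleGraph W} (e : G ≃g G')
    {T : Set V} (h : IsMinimalSeparator G T) : IsMinimalSeparator G' (⇑e '' T) := by
  obtain ⟨x, y, hxy, hnadj, hmin⟩ := h
  exact ⟨e x, e y, fun hc => hxy (e.injective hc),
    fun hc => hnadj (e.map_adj_iff.1 hc), hmin.map e⟩

-- ===== cardinality helpers =====

lemma ncard_add_le_card [Finite β] (T s : Set β) (hdisj : Disjoint T s) :
    T.ncard + s.ncard ≤ Nat.card β := by
  rw [← Set.ncard_union_eq hdisj T.toFinite s.toFinite]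
  calc (T ∪ s).ncard ≤ (Set.univ : Set β).ncard :=
        Set.ncard_le_ncard (Set.subset_univ _) Set.finite_univ
    _ = Nat.card β := Set.ncard_univ _

lemma card_coe_lt [Finite β] {T : Set β} {x : β} (hx : x ∉ T) :
    Nat.card ↥T < Nat.card β := by
  rw [Nat.card_coe_set_eq]
  have := ncard_add_le_card T {x} (Set.disjoint_singleton_right.2 hx)
  rw [Set.ncard_singleton] at this
  have hpos : 0 < Nat.card β := Nat.card_pos_iff.2 ⟨⟨x⟩, inferInstance⟩
  omega

lemma card_coe_add_two_le [Finite β] {T : Set β} {x y : β} (hx : x ∉ T) (hy : y ∉ T)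
    (hxy : x ≠ y) : Nat.card ↥T + 2 ≤ Nat.card β := by
  rw [Nat.card_coe_set_eq]
  have := ncard_add_le_card T {x, y} (by
    rw [Set.disjoint_right]; intro a ha
    simp only [Set.mem_insert_iff, Set.mem_singleton_iff] at ha
    rcases ha with rfl | rfl; exacts [hx, hy])
  rwa [Set.ncard_pair hxy] at this

lemma card_coe_add_three_le [Finite β] {T : Set β} {x y z : β} (hx : x ∉ T) (hy : y ∉ T)
    (hz : z ∉ T) (hxy : x ≠ y) (hxz : x ≠ z) (hyz : y ≠ z) :
    Nat.card ↥T + 3 ≤ Nat.card β := by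
  rw [Nat.card_coe_set_eq]
  have := ncard_add_le_card T {x, y, z} (by
    rw [Set.disjoint_right]; intro a ha
    simp only [Set.mem_insert_iff, Set.mem_singleton_iff] at ha
    rcases ha with rfl | rfl | rfl; exacts [hx, hy, hz])
  have h3 : ({x, y, z} : Set β).ncard = 3 := by
    rw [Set.ncard_insert_of_notMem (by simp [hxy, hxz]), Set.ncard_pair hyz]
  omega

lemma card_coe_add_four_le [Finite β] {T : Set β} {x y z w : β} (hx : x ∉ T) (hy : y ∉ T)
    (hz : z ∉ T) (hw : w ∉ T) (hxy : x ≠ y) (hxz : x ≠ z) (hxw : x ≠ w) (hyz : y ≠ z)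
    (hyw : y ≠ w) (hzw : z ≠ w) : Nat.card ↥T + 4 ≤ Nat.card β := by
  rw [Nat.card_coe_set_eq]
  have := ncard_add_le_card T {x, y, z, w} (by
    rw [Set.disjoint_right]; intro a ha
    simp only [Set.mem_insert_iff, Set.mem_singleton_iff] at ha
    rcases ha with rfl | rfl | rfl | rfl; exacts [hx, hy, hz, hw])
  have h4 : ({x, y, z, w} : Set β).ncard = 4 := by
    rw [Set.ncard_insert_of_notMem (by simp [hxy, hxz, hxw]),
      Set.ncard_insert_of_notMem (by simp [hyz, hyw]), Set.ncard_pair hzw]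
  omega

lemma hereditary_iso_closed {C : GraphClass} (hC : Hereditary C) {α' β' : Type}
    [Finite α'] [Finite β'] {G : SimpleGraph α'} {H : SimpleGraph β'} (e : H ≃g G)
    (hG : C α' G) : C β' H :=
  hC α' G β' H Set.univ ⟨e.trans G.induceUnivIso.symm⟩ hG

end Aux

/-- if `C` is hereditary, closed under edge addition, and closed under the
addition of universal vertices, then `ℳ_{𝒢_C} = {2K₁ ∨ H ∣ H ∈ ℳ_C}`. -/
theorem statement_8 (C : GraphClass) (hC : Hereditary C) (hE : EdgeAddClosed C)
    (hU : UnivAddClosed C) (V : Type) [Finite V] (F : SimpleGraph V) :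
    MemMC (GCclass C) F ↔
      ∃ (W : Type) (hW : Finite W) (H : SimpleGraph W),
        @MemMC C W hW H ∧ Nonempty (F ≃g join (⊥ : SimpleGraph (Fin 2)) H) := by
  constructor
  · rintro ⟨hFnot, hFmin⟩
    have hFnot' : ∃ S, IsMinimalSeparator F S ∧ ¬ C ↥S (F.induce S) := by
      by_contra hcon
      push_neg at hcon
      exact hFnot (fun S hS => hcon S hS)
    obtain ⟨S, hSsep, hSC⟩ := hFnot'
    obtain ⟨a, b, hab, hnadj, hmin⟩ := hSsep
    have hIM : IsInducedMinor (join (⊥ : SimpleGraph (Fin 2)) (F.induce S)) F :=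
      minsep_join_im hmin
    have hJnot : ¬ GCclass C _ (join (⊥ : SimpleGraph (Fin 2)) (F.induce S)) := by
      intro hmem
      have h1 := hmem _ (rangeInr_isMinimalSeparator (F.induce S))
      exact hSC (hereditary_iso_closed hC (rangeInrIso _ _).symm h1)
    have hne : ¬ IsEmpty ((join (⊥ : SimpleGraph (Fin 2)) (F.induce S)) ≃g F) :=
      fun hE => hJnot (hFmin _ _ hIM hE)
    rw [not_isEmpty_iff] at hne
    obtain ⟨e⟩ := hne
    refine ⟨↥S, inferInstance, F.induce S, ⟨hSC, ?_⟩, ⟨e.symm⟩⟩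
    intro β hβ H' hIM' hne'
    have hJ'IM : IsInducedMinor (join (⊥ : SimpleGraph (Fin 2)) H') F :=
      (IsInducedMinor.join_lift hIM').of_iso_right e
    have hE : IsEmpty ((join (⊥ : SimpleGraph (Fin 2)) H') ≃g F) := by
      by_contra hEE
      rw [not_isEmpty_iff] at hEE
      obtain ⟨f⟩ := hEE
      have hcard := nonempty_iso_card_eq (f.trans e.symm)
      rw [Nat.card_sum, Nat.card_sum] at hcard
      have hcard' : Nat.card β = Nat.card ↥S := by omega
      obtain ⟨g⟩ := hIM'.iso_of_card_eq hcard'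
      exact hne'.false g
    have hJ'mem := hFmin _ _ hJ'IM hE
    have h2 := hJ'mem _ (rangeInr_isMinimalSeparator H')
    exact hereditary_iso_closed hC (rangeInrIso _ _).symm h2
  · rintro ⟨W', hW', H, ⟨hHnot, hHmin⟩, ⟨e⟩⟩
    constructor
    · intro hmem
      have hms := (rangeInr_isMinimalSeparator H).map e.symm
      have h1 := hmem _ hms
      have hiso : H ≃g F.induce (⇑e.symm '' Set.range Sum.inr) :=
        (rangeInrIso (⊥ : SimpleGraph (Fin 2)) H).symm.trans (induceImageIso e.symm _)
      exact hHnot (hereditary_iso_closed hC hiso h1)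
    · intro β hβ F₁ hF₁IM hF₁ne
      intro T hTsep
      obtain ⟨a, b, hab, hnadj, hminT⟩ := hTsep
      obtain ⟨Ψ, hΨ⟩ := hF₁IM.of_iso_right e
      have hIMJ : IsInducedMinor F₁ (join (⊥ : SimpleGraph (Fin 2)) H) := ⟨Ψ, hΨ⟩
      have haT : a ∉ T := hminT.1.1
      have hbT : b ∉ T := hminT.1.2.1
      have hcardβ : Nat.card β ≤ Nat.card W' + 2 := by
        have h1 := hIMJ.card_le
        rw [Nat.card_sum] at h1
        have h2 : Nat.card (Fin 2) = 2 := by simp [Nat.card_eq_fintype_card]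
        omega
      have hadj_of : ∀ (z v : β), v ≠ z → ∀ x ∈ Ψ z, ∀ y ∈ Ψ v,
          (join (⊥ : SimpleGraph (Fin 2)) H).Adj x y → F₁.Adj z v := by
        intro z v hvz x hx y hy hxy
        exact (hΨ.2.2.2 z v (fun hc => hvz hc.symm)).2 ⟨x, hx, y, hy, hxy⟩
      have hdisj_elt : ∀ {z v : β}, z ≠ v → ∀ {x}, x ∈ Ψ z → x ∈ Ψ v → False := by
        intro z v hzv x hx hx'
        exact Set.disjoint_left.1 (hΨ.2.1 z v hzv) hx hx'
      have fin2_ne : ∀ {i j k : Fin 2}, i ≠ j → k ≠ i → k = j := by decide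
      have hsubinr : ∀ v : β, Sum.inl 0 ∉ Ψ v → Sum.inl 1 ∉ Ψ v →
          Ψ v ⊆ Set.range Sum.inr := by
        intro v h0 h1 x hx
        rcases x with i | w
        · rcases fin2_cases i with rfl | rfl
          · exact absurd hx h0
          · exact absurd hx h1
        · exact ⟨w, rfl⟩
      have huniv_in_T : ∀ z : β, (∀ v, v ≠ z → F₁.Adj z v) → z ∈ T ∧ z ≠ a ∧ z ≠ b := by
        intro z hz
        have hza : z ≠ a := by
          rintro rfl
          exact hnadj (hz b (Ne.symm hab))
        have hzb : z ≠ b := by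
          rintro rfl
          exact hnadj ((hz a hab).symm)
        refine ⟨?_, hza, hzb⟩
        by_contra hzT
        refine hminT.1.2.2 ⟨Walk.cons ((hz a (Ne.symm hza)).symm)
          (Walk.cons (hz b (Ne.symm hzb)) Walk.nil), ?_⟩
        intro v hv
        simp only [Walk.support_cons, Walk.support_nil, List.mem_cons,
          List.mem_singleton] at hv
        rcases hv with rfl | rfl | rfl | hf
        · exact haT
        · exact hzT
        · exact hbT
        · exact absurd hf List.not_mem_nil
      have key_univ : ∀ z : β, (∃ i : Fin 2, Sum.inl i ∈ Ψ z) →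
          (∃ y ∈ Ψ z, y ∈ Set.range Sum.inr) → ∀ v, v ≠ z → F₁.Adj z v := by
        rintro z ⟨i, hi⟩ ⟨y, hy, w0, rfl⟩ v hvz
        obtain ⟨x, hx⟩ := hΨ.1 v
        rcases x with j | w
        · exact hadj_of z v hvz _ hy _ hx join_adj_inr_inl
        · exact hadj_of z v hvz _ hi _ hx join_adj_inl_inr
      have finish_one : ∀ z : β, (∀ v, v ≠ z → F₁.Adj z v) →
          (∀ v, v ≠ z → Ψ v ⊆ Set.range Sum.inr) → C ↥T (F₁.induce T) := by
        intro z hzuniv hrest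
        obtain ⟨hzT, hza, hzb⟩ := huniv_in_T z hzuniv
        have hIMsub : IsInducedMinor (F₁.induce (T \ {z})) H :=
          im_of_model_subset_inr (hΨ.restrict (T \ {z}))
            (fun v => hrest v.1 (by have := v.2.2; simpa using this))
        have hcard3 : Nat.card ↥(T \ {z}) + 3 ≤ Nat.card β :=
          card_coe_add_three_le (by simp [haT]) (by simp [hbT]) (by simp)
            hab (Ne.symm hza) (Ne.symm hzb)
        have hC1 : C ↥(T \ {z}) (F₁.induce (T \ {z})) :=
          hHmin _ _ hIMsub (isEmpty_iso_of_card_ne (by omega))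
        exact hU _ (F₁.induce (T \ {z})) _ (F₁.induce T) hC1
          ⟨univIso1 F₁ T z hzT (fun v _ hvz => hzuniv v hvz)⟩
      have finish_two : ∀ z z' : β, z ≠ z' → (∀ v, v ≠ z → F₁.Adj z v) →
          (∀ v, v ≠ z' → F₁.Adj z' v) →
          (∀ v, v ≠ z → v ≠ z' → Ψ v ⊆ Set.range Sum.inr) → C ↥T (F₁.induce T) := by
        intro z z' hzz' hzu hz'u hrest
        obtain ⟨hzT, hza, hzb⟩ := huniv_in_T z hzu
        obtain ⟨hz'T, hz'a, hz'b⟩ := huniv_in_T z' hz'u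
        have hIMsub : IsInducedMinor (F₁.induce ((T \ {z}) \ {z'})) H :=
          im_of_model_subset_inr (hΨ.restrict _)
            (fun v => hrest v.1 (by have := v.2.1.2; simpa using this)
              (by have := v.2.2; simpa using this))
        have hcard4 : Nat.card ↥((T \ {z}) \ {z'}) + 4 ≤ Nat.card β :=
          card_coe_add_four_le (x := a) (y := b) (z := z) (w := z') (by simp [haT])
            (by simp [hbT]) (by simp) (by simp [Ne.symm hzz'])
            hab (Ne.symm hza) (Ne.symm hz'a) (Ne.symm hzb) (Ne.symm hz'b) hzz'
        have hC2 : C ↥((T \ {z}) \ {z'}) (F₁.induce ((T \ {z}) \ {z'})) :=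
          hHmin _ _ hIMsub (isEmpty_iso_of_card_ne (by omega))
        have hC1 : C ↥(T \ {z}) (F₁.induce (T \ {z})) :=
          hU _ _ _ _ hC2 ⟨univIso1 F₁ (T \ {z}) z' ⟨hz'T, by simpa using Ne.symm hzz'⟩
            (fun v _ hvz' => hz'u v hvz')⟩
        exact hU _ _ _ _ hC1 ⟨univIso1 F₁ T z hzT (fun v _ hvz => hzu v hvz)⟩
      have single_case : ∀ (i j : Fin 2), i ≠ j → ∀ z, Sum.inl i ∈ Ψ z →
          (∀ v, Sum.inl j ∉ Ψ v) → C ↥T (F₁.induce T) := by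
        intro i j hij z hiz hjnone
        have hzu : ∀ v, v ≠ z → F₁.Adj z v := by
          intro v hvz
          obtain ⟨x, hx⟩ := hΨ.1 v
          rcases x with k | w
          · rcases eq_or_ne k i with rfl | hki
            · exact (hdisj_elt (Ne.symm hvz) hiz hx).elim
            · exact absurd ((fin2_ne hij hki) ▸ hx) (hjnone v)
          · exact hadj_of z v hvz _ hiz _ hx join_adj_inl_inr
        have hrest : ∀ v, v ≠ z → Ψ v ⊆ Set.range Sum.inr := by
          intro v hvz x hx
          rcases x with k | w
          · rcases eq_or_ne k i with rfl | hki
            · exact (hdisj_elt (Ne.symm hvz) hiz hx).elim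
            · exact absurd ((fin2_ne hij hki) ▸ hx) (hjnone v)
          · exact ⟨w, rfl⟩
        exact finish_one z hzu hrest
      by_cases hspec1 : ∃ z, Sum.inl (0 : Fin 2) ∈ Ψ z
      · by_cases hspec2 : ∃ z', Sum.inl (1 : Fin 2) ∈ Ψ z'
        · obtain ⟨z, hz0⟩ := hspec1
          obtain ⟨z', hz1⟩ := hspec2
          rcases eq_or_ne z z' with rfl | hzz'
          · have hmeet : ∃ y ∈ Ψ z, y ∈ Set.range Sum.inr := by
              by_contra hmm
              push_neg at hmm
              have hsub2 : Ψ z ⊆ {Sum.inl 0, Sum.inl 1} := by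
                intro x hx
                rcases x with i | w
                · rcases fin2_cases i with rfl | rfl <;> simp
                · exact absurd ⟨w, rfl⟩ (hmm _ hx)
              have hconn := hΨ.2.2.1 z
              rw [induce_connected_iff] at hconn
              obtain ⟨p, hp⟩ := hconn.2 _ hz0 _ hz1
              cases p with
              | @cons _ x _ hadj q =>
                have hx2 := hsub2 (hp x (by simp))
                simp only [Set.mem_insert_iff, Set.mem_singleton_iff] at hx2
                rcases hx2 with rfl | rfl
                · exact hadj.ne rfl
                · simpa using hadj
            exact finish_one z (key_univ z ⟨0, hz0⟩ hmeet)
              (fun v hvz => hsubinr v (fun hc => hdisj_elt (Ne.symm hvz) hz0 hc)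
                (fun hc => hdisj_elt (Ne.symm hvz) hz1 hc))
          · by_cases hmeet : (∃ y ∈ Ψ z, y ∈ Set.range Sum.inr) ∨
                (∃ y ∈ Ψ z', y ∈ Set.range Sum.inr)
            · have key2 : ∀ (p q : β) (i j : Fin 2), p ≠ q → i ≠ j → Sum.inl i ∈ Ψ p →
                  Sum.inl j ∈ Ψ q → (∃ y ∈ Ψ p, y ∈ Set.range Sum.inr) →
                  (∀ v, v ≠ p → F₁.Adj p v) ∧ (∀ v, v ≠ q → F₁.Adj q v) := by
                intro p q i j hpq hij hip hjq hyp
                refine ⟨key_univ p ⟨i, hip⟩ hyp, ?_⟩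
                intro v hvq
                obtain ⟨x, hx⟩ := hΨ.1 v
                rcases x with k | w
                · rcases eq_or_ne k j with rfl | hkj
                  · exact (hdisj_elt (Ne.symm hvq) hjq hx).elim
                  · have hk : k = i := fin2_ne (Ne.symm hij) hkj
                    subst hk
                    rcases eq_or_ne v p with rfl | hvp
                    · obtain ⟨y, hy, w0, rfl⟩ := hyp
                      exact hadj_of q v hvq _ hjq _ hy join_adj_inl_inr
                    · exact (hdisj_elt (Ne.symm hvp) hip hx).elim
                · exact hadj_of q v hvq _ hjq _ hx join_adj_inl_inr
              rcases hmeet with hmz | hmz'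
              · obtain ⟨hu1, hu2⟩ := key2 z z' 0 1 hzz' (by decide) hz0 hz1 hmz
                exact finish_two z z' hzz' hu1 hu2 (fun v h1 h2 => hsubinr v
                  (fun hc => hdisj_elt (Ne.symm h1) hz0 hc)
                  (fun hc => hdisj_elt (Ne.symm h2) hz1 hc))
              · obtain ⟨hu2, hu1⟩ := key2 z' z 1 0 (Ne.symm hzz') (by decide) hz1 hz0 hmz'
                exact finish_two z z' hzz' hu1 hu2 (fun v h1 h2 => hsubinr v
                  (fun hc => hdisj_elt (Ne.symm h1) hz0 hc)
                  (fun hc => hdisj_elt (Ne.symm h2) hz1 hc))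
            · push_neg at hmeet
              obtain ⟨hm1, hm2⟩ := hmeet
              have hΨz : Ψ z = {Sum.inl 0} := by
                apply Set.eq_singleton_iff_unique_mem.2 ⟨hz0, ?_⟩
                intro x hx
                rcases x with i | w
                · rcases fin2_cases i with rfl | rfl
                  · rfl
                  · exact (hdisj_elt hzz' hx hz1).elim
                · exact absurd ⟨w, rfl⟩ (hm1 _ hx)
              have hΨz' : Ψ z' = {Sum.inl 1} := by
                apply Set.eq_singleton_iff_unique_mem.2 ⟨hz1, ?_⟩
                intro x hx
                rcases x with i | w
                · rcases fin2_cases i with rfl | rfl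
                  · exact ((hdisj_elt (Ne.symm hzz') hx hz0).elim)
                  · rfl
                · exact absurd ⟨w, rfl⟩ (hm2 _ hx)
              have hnadjzz' : ¬ F₁.Adj z z' := by
                intro hadj
                obtain ⟨x, hx, y, hy, hxy⟩ := (hΨ.2.2.2 z z' hzz').1 hadj
                rw [hΨz] at hx
                rw [hΨz'] at hy
                simp only [Set.mem_singleton_iff] at hx hy
                subst hx; subst hy
                simpa using hxy
              have hrest : ∀ v, v ≠ z → v ≠ z' → Ψ v ⊆ Set.range Sum.inr := fun v h1 h2 =>
                hsubinr v (fun hc => hdisj_elt (Ne.symm h1) hz0 hc)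
                  (fun hc => hdisj_elt (Ne.symm h2) hz1 hc)
              have hzv : ∀ v, v ≠ z → v ≠ z' → F₁.Adj z v ∧ F₁.Adj z' v := by
                intro v h1 h2
                obtain ⟨x, hx⟩ := hΨ.1 v
                obtain ⟨w, rfl⟩ := hrest v h1 h2 hx
                exact ⟨hadj_of z v h1 _ hz0 _ hx join_adj_inl_inr,
                  hadj_of z' v h2 _ hz1 _ hx join_adj_inl_inr⟩
              by_cases habz : (a = z ∧ b = z') ∨ (a = z' ∧ b = z)
              · have hTeq : T = {z, z'}ᶜ := by
                  apply Set.eq_of_subset_of_subset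
                  · intro v hv
                    simp only [Set.mem_compl_iff, Set.mem_insert_iff, Set.mem_singleton_iff]
                    push_neg
                    constructor
                    · intro hc
                      rcases habz with ⟨ha', hb'⟩ | ⟨ha', hb'⟩
                      · exact haT (by rw [ha', ← hc]; exact hv)
                      · exact hbT (by rw [hb', ← hc]; exact hv)
                    · intro hc
                      rcases habz with ⟨ha', hb'⟩ | ⟨ha', hb'⟩
                      · exact hbT (by rw [hb', ← hc]; exact hv)
                      · exact haT (by rw [ha', ← hc]; exact hv)
                  · intro v hv
                    simp only [Set.mem_compl_iff, Set.mem_insert_iff,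
                      Set.mem_singleton_iff] at hv
                    push_neg at hv
                    by_contra hvT
                    have hadj1 : F₁.Adj a v := by
                      rcases habz with ⟨ha', _⟩ | ⟨ha', _⟩
                      · rw [ha']; exact (hzv v hv.1 hv.2).1
                      · rw [ha']; exact (hzv v hv.1 hv.2).2
                    have hadj2 : F₁.Adj v b := by
                      rcases habz with ⟨_, hb'⟩ | ⟨_, hb'⟩
                      · rw [hb']; exact ((hzv v hv.1 hv.2).2).symm
                      · rw [hb']; exact ((hzv v hv.1 hv.2).1).symm
                    refine hminT.1.2.2 ⟨Walk.cons hadj1 (Walk.cons hadj2 Walk.nil), ?_⟩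
                    intro x hx
                    simp only [Walk.support_cons, Walk.support_nil, List.mem_cons,
                      List.mem_singleton] at hx
                    rcases hx with rfl | rfl | rfl | hf
                    · exact haT
                    · exact hvT
                    · exact hbT
                    · exact absurd hf List.not_mem_nil
                have hsubT : ∀ v : ↥T, Ψ v.1 ⊆ Set.range Sum.inr := by
                  intro v
                  have hv2 : v.1 ∈ ({z, z'}ᶜ : Set β) := by rw [← hTeq]; exact v.2
                  simp only [Set.mem_compl_iff, Set.mem_insert_iff,
                    Set.mem_singleton_iff] at hv2
                  push_neg at hv2
                  exact hrest v.1 hv2.1 hv2.2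
                have hIMT : IsInducedMinor (F₁.induce T) H :=
                  im_of_model_subset_inr (hΨ.restrict T) hsubT
                rcases lt_or_eq_of_le hIMT.card_le with hlt | heq
                · exact hHmin _ _ hIMT (isEmpty_iso_of_card_ne (ne_of_lt hlt))
                · obtain ⟨g⟩ := hIMT.iso_of_card_eq heq
                  exfalso
                  have hiso2 : F₁ ≃g join (⊥ : SimpleGraph (Fin 2)) (F₁.induce T) :=
                    F₁.induceUnivIso.symm.trans ((univIso2 F₁ Set.univ z z' trivial trivial
                      hzz' hnadjzz' (fun v _ h1 h2 => hzv v h1 h2)).trans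
                      (joinCongr (induceCongrSet F₁ (by
                        rw [hTeq, Set.compl_eq_univ_diff]))))
                  exact hF₁ne.false (hiso2.trans ((joinCongr g).trans e.symm))
              · have h1imp : a = z → b = z' := by
                  intro ha'
                  by_contra hb'
                  have hbz : b ≠ z := by rw [← ha']; exact Ne.symm hab
                  exact hnadj (by rw [ha']; exact (hzv b hbz hb').1)
                have h2imp : a = z' → b = z := by
                  intro ha'
                  by_contra hb'
                  have hbz' : b ≠ z' := by rw [← ha']; exact Ne.symm hab
                  exact hnadj (by rw [ha']; exact (hzv b hb' hbz').2)
                have hav : a ≠ z ∧ a ≠ z' ∧ b ≠ z ∧ b ≠ z' := by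
                  refine ⟨?_, ?_, ?_, ?_⟩
                  · intro haz; exact habz (Or.inl ⟨haz, h1imp haz⟩)
                  · intro haz'; exact habz (Or.inr ⟨haz', h2imp haz'⟩)
                  · intro hbz
                    by_cases haz' : a = z'
                    · exact habz (Or.inr ⟨haz', hbz⟩)
                    · apply hnadj
                      have haz : a ≠ z := fun hc => hab (by rw [hc, ← hbz])
                      have h3 := (hzv a haz haz').1
                      rw [← hbz] at h3
                      exact h3.symm
                  · intro hbz'
                    by_cases haz : a = z
                    · exact habz (Or.inl ⟨haz, hbz'⟩)
                    · apply hnadj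
                      have haz' : a ≠ z' := fun hc => hab (by rw [hc, ← hbz'])
                      have h3 := (hzv a haz haz').2
                      rw [← hbz'] at h3
                      exact h3.symm
                have hzT : z ∈ T := by
                  by_contra hzT
                  refine hminT.1.2.2 ⟨Walk.cons ((hzv a hav.1 hav.2.1).1).symm
                    (Walk.cons (hzv b hav.2.2.1 hav.2.2.2).1 Walk.nil), ?_⟩
                  intro x hx
                  simp only [Walk.support_cons, Walk.support_nil, List.mem_cons,
                    List.mem_singleton] at hx
                  rcases hx with rfl | rfl | rfl | hf
                  · exact haT
                  · exact hzT
                  · exact hbT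
                  · exact absurd hf List.not_mem_nil
                have hz'T : z' ∈ T := by
                  by_contra hz'T
                  refine hminT.1.2.2 ⟨Walk.cons ((hzv a hav.1 hav.2.1).2).symm
                    (Walk.cons (hzv b hav.2.2.1 hav.2.2.2).2 Walk.nil), ?_⟩
                  intro x hx
                  simp only [Walk.support_cons, Walk.support_nil, List.mem_cons,
                    List.mem_singleton] at hx
                  rcases hx with rfl | rfl | rfl | hf
                  · exact haT
                  · exact hz'T
                  · exact hbT
                  · exact absurd hf List.not_mem_nil
                have has : a ∈ ({z, z'}ᶜ : Set β) := by simp [hav.1, hav.2.1]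
                have hbs : b ∈ ({z, z'}ᶜ : Set β) := by simp [hav.2.2.1, hav.2.2.2]
                have hminT₀ : IsMinSep (F₁.induce ({z, z'}ᶜ : Set β)) ⟨a, has⟩ ⟨b, hbs⟩
                    {v : ↥({z, z'}ᶜ : Set β) | v.1 ∈ T} := by
                  refine ⟨⟨fun hc => haT hc, fun hc => hbT hc, ?_⟩, ?_⟩
                  · rintro ⟨p, hp⟩
                    refine hminT.1.2.2 ⟨p.map (induceHom' F₁ _), ?_⟩
                    intro v hv
                    change v ∈ (p.map (induceHom' F₁ _)).support at hv
                    rw [Walk.support_map] at hv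
                    obtain ⟨u, hu, rfl⟩ := List.mem_map.1 hv
                    exact hp u hu
                  · intro T' hT' hsep'
                    have hT''sub : Subtype.val '' T' ∪ {z, z'} ⊂ T := by
                      obtain ⟨w0, hw1, hw2⟩ := Set.exists_of_ssubset hT'
                      constructor
                      · rintro x (⟨u, hu, rfl⟩ | hx)
                        · exact hT'.1 hu
                        · simp only [Set.mem_insert_iff, Set.mem_singleton_iff] at hx
                          rcases hx with rfl | rfl
                          · exact hzT
                          · exact hz'T
                      · intro hsub
                        have hw3 := hsub hw1
                        rcases hw3 with ⟨u, hu, hequ⟩ | hw4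
                        · exact hw2 (by rwa [show u = w0 from Subtype.ext hequ] at hu)
                        · exact w0.2 hw4
                    apply hminT.2 _ hT''sub
                    refine ⟨?_, ?_, ?_⟩
                    · rintro (⟨u, hu, hequ⟩ | hx)
                      · apply haT
                        have h4 : (u : β) ∈ T := hT'.1 hu
                        rwa [hequ] at h4
                      · simp only [Set.mem_insert_iff, Set.mem_singleton_iff] at hx
                        rcases hx with h | h
                        · exact hav.1 h
                        · exact hav.2.1 h
                    · rintro (⟨u, hu, hequ⟩ | hx)
                      · apply hbT
                        have h4 : (u : β) ∈ T := hT'.1 hu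
                        rwa [hequ] at h4
                      · simp only [Set.mem_insert_iff, Set.mem_singleton_iff] at hx
                        rcases hx with h | h
                        · exact hav.2.2.1 h
                        · exact hav.2.2.2 h
                    · rintro ⟨p, hp⟩
                      have hsupport : ∀ v ∈ p.support, v ∈ ({z, z'}ᶜ : Set β) := by
                        intro v hv hvzz
                        exact hp v hv (Or.inr hvzz)
                      obtain ⟨q, hq⟩ := exists_induce_walk_support p hsupport has hbs
                      apply hsep'.2.2
                      refine ⟨q, ?_⟩
                      intro x hx hxT'
                      exact hp x.1 (hq x hx) (Or.inl ⟨x, hxT', rfl⟩)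
                have hJoinIM := minsep_join_im hminT₀
                have hF₀IM : IsInducedMinor (F₁.induce ({z, z'}ᶜ : Set β)) H :=
                  im_of_model_subset_inr (hΨ.restrict _)
                    (fun v => hrest v.1 (fun hc => v.2 (Or.inl hc))
                      (fun hc => v.2 (Or.inr hc)))
                have hXIM : IsInducedMinor (join (⊥ : SimpleGraph (Fin 2))
                    ((F₁.induce ({z, z'}ᶜ : Set β)).induce
                      {v : ↥({z, z'}ᶜ : Set β) | v.1 ∈ T})) H :=
                  hJoinIM.trans hF₀IM
                have hT₀le : Nat.card ↥{v : ↥({z, z'}ᶜ : Set β) | v.1 ∈ T} + 2 ≤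
                    Nat.card ↥({z, z'}ᶜ : Set β) :=
                  card_coe_add_two_le (x := ⟨a, has⟩) (y := ⟨b, hbs⟩)
                    (fun hc => haT hc) (fun hc => hbT hc)
                    (fun hc => hab (congrArg Subtype.val hc))
                have hcardX : Nat.card (Fin 2 ⊕ ↥{v : ↥({z, z'}ᶜ : Set β) | v.1 ∈ T}) =
                    Nat.card ↥{v : ↥({z, z'}ᶜ : Set β) | v.1 ∈ T} + 2 := by
                  rw [Nat.card_sum]
                  have h5 : Nat.card (Fin 2) = 2 := by simp [Nat.card_eq_fintype_card]
                  omega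
                have hXle := hXIM.card_le
                have hsle := hF₀IM.card_le
                rcases lt_or_eq_of_le hXle with hlt | heqX
                · have hCX := hHmin _ _ hXIM (isEmpty_iso_of_card_ne (ne_of_lt hlt))
                  have himg : Subtype.val '' {v : ↥({z, z'}ᶜ : Set β) | v.1 ∈ T} =
                      T \ {z, z'} := by
                    ext x
                    constructor
                    · rintro ⟨u, hu, rfl⟩
                      exact ⟨hu, u.2⟩
                    · rintro ⟨hxT, hxzz⟩
                      exact ⟨⟨x, hxzz⟩, hxT, rfl⟩
                  have hiso3 : F₁.induce T ≃g join (⊥ : SimpleGraph (Fin 2))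
                      ((F₁.induce ({z, z'}ᶜ : Set β)).induce
                        {v : ↥({z, z'}ᶜ : Set β) | v.1 ∈ T}) :=
                    (univIso2 F₁ T z z' hzT hz'T hzz' hnadjzz'
                      (fun v _ h1 h2 => hzv v h1 h2)).trans
                      (joinCongr (((induceInduceIso F₁ _ _).trans
                        (induceCongrSet F₁ himg)).symm))
                  exact hereditary_iso_closed hC hiso3 hCX
                · exfalso
                  have hseq : Nat.card ↥({z, z'}ᶜ : Set β) = Nat.card W' := by omega
                  obtain ⟨g⟩ := hF₀IM.iso_of_card_eq hseq
                  have hiso2 : F₁ ≃g join (⊥ : SimpleGraph (Fin 2))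
                      (F₁.induce ({z, z'}ᶜ : Set β)) :=
                    F₁.induceUnivIso.symm.trans ((univIso2 F₁ Set.univ z z' trivial trivial
                      hzz' hnadjzz' (fun v _ h1 h2 => hzv v h1 h2)).trans
                      (joinCongr (induceCongrSet F₁ (Set.compl_eq_univ_diff _).symm)))
                  exact hF₁ne.false (hiso2.trans ((joinCongr g).trans e.symm))
        · obtain ⟨z, hz0⟩ := hspec1
          push_neg at hspec2
          exact single_case 0 1 (by decide) z hz0 hspec2
      · by_cases hspec2 : ∃ z', Sum.inl (1 : Fin 2) ∈ Ψ z'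
        · obtain ⟨z', hz1⟩ := hspec2
          push_neg at hspec1
          exact single_case 1 0 (by decide) z' hz1 hspec1
        · push_neg at hspec1
          push_neg at hspec2
          have hIMT : IsInducedMinor (F₁.induce T) H :=
            im_of_model_subset_inr (hΨ.restrict T)
              (fun v => hsubinr v.1 (hspec1 v.1) (hspec2 v.1))
          have hIMF₁ : IsInducedMinor F₁ H :=
            im_of_model_subset_inr hΨ (fun v => hsubinr v (hspec1 v) (hspec2 v))
          have hlt : Nat.card ↥T < Nat.card W' :=
            lt_of_lt_of_le (card_coe_lt haT) hIMF₁.card_le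
          exact hHmin _ _ hIMT (isEmpty_iso_of_card_ne (ne_of_lt hlt))

end PaperSep
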